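/- For every d ≥ 1, the identity log( Σ_{d-partitions π} ω^c_π · t^{π_{1...1}} · q^{|π|} ) = t · Σ_{(d-1)-partitions ξ, |ξ| ≥ 1} q^{|ξ|} holds in Q[[t,q]], where ω^c_π is defined via binary representations of (d-1)-partitions exactly as in the solid partition case. -/

import Mathlib

/-- A `d`-dimensional partition, 0-indexed: a finitely supported family of non-negative
integers indexed by `Fin d → ℕ`, weakly decreasing in each coordinate. (A `0`-partition
is a single non-negative integer; `1`-partitions are ordinary partitions; `2`-partitions
are plane partitions; `3`-partitions are solid partitions.) -/
structure DPartition (d : ℕ) where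
  val : (Fin d → ℕ) → ℕ
  dec : ∀ (x : Fin d → ℕ) (i : Fin d), val (Function.update x i (x i + 1)) ≤ val x
  finite : (Function.support val).Finite

/-- The size `|π|` of a `d`-partition. -/
noncomputable def DPartition.size {d : ℕ} (π : DPartition d) : ℕ :=
  π.finite.toFinset.sum π.val

/-- The binary representation of a `d`-partition `ξ`, as a family indexed by
`Fin (d+1) → ℕ`: it is `1` iff the last coordinate is `< ξ` of the first `d`
coordinates. -/
def DPartition.bin {d : ℕ} (ξ : DPartition d) (x : Fin (d + 1) → ℕ) : ℕ :=
  if x (Fin.last d) < ξ.val (fun i => x i.castSucc) then 1 else 0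

/-- A multiplicity sequence in `C_π` for a `(d+1)`-partition `π`: finitely supported
non-negative multiplicities indexed by non-empty `d`-partitions whose weighted sum of
binary representations recovers `π`. -/
def DIsMultSeq {d : ℕ} (π : DPartition (d + 1)) (m : DPartition d → ℕ) : Prop :=
  (Function.support m).Finite ∧ (∀ ξ : DPartition d, ξ.size = 0 → m ξ = 0) ∧
    ∀ x : Fin (d + 1) → ℕ, π.val x = ∑ᶠ ξ : DPartition d, m ξ * ξ.bin x

/-- The combinatorial weight `ω^c_π = Σ_{{m_ξ}∈C_π} ∏_ξ 1/(m_ξ)!`. -/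
noncomputable def DPartition.omegaC {d : ℕ} (π : DPartition (d + 1)) : ℚ :=
  ∑ᶠ m ∈ {m : DPartition d → ℕ | DIsMultSeq π m},
    ∏ᶠ ξ : DPartition d, (1 : ℚ) / ((m ξ).factorial : ℚ)

open Function

theorem DPartition.ext' {d : ℕ} {π ρ : DPartition d} (h : π.val = ρ.val) : π = ρ := by
  cases π; cases ρ; simpa using h

theorem DPartition.val_antitone_aux {d : ℕ} (π : DPartition d) :
    ∀ (k : ℕ) (x y : Fin d → ℕ), (∀ i, x i ≤ y i) → (∑ i, (y i - x i)) = k →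
      π.val y ≤ π.val x := by
  intro k
  induction k with
  | zero =>
    intro x y hxy hsum
    have : x = y := by
      funext i
      have := Finset.sum_eq_zero_iff.mp hsum i (Finset.mem_univ i)
      have := hxy i
      omega
    rw [this]
  | succ k ih =>
    intro x y hxy hsum
    have hne : ∃ i, x i < y i := by
      by_contra h
      push_neg at h
      have : ∑ i, (y i - x i) = 0 := Finset.sum_eq_zero fun i _ => by
        have := h i; omega
      omega
    obtain ⟨i, hi⟩ := hne
    set y' := Function.update y i (y i - 1) with hy'
    have h1 : π.val y ≤ π.val y' := by
      have : Function.update y' i (y' i + 1) = y := by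
        funext j
        rcases eq_or_ne j i with rfl | hj
        · simp [hy', Function.update_self]; omega
        · simp [hy', Function.update_of_ne hj]
      calc π.val y = π.val (Function.update y' i (y' i + 1)) := by rw [this]
        _ ≤ π.val y' := π.dec y' i
    refine h1.trans (ih x y' (fun j => ?_) ?_)
    · rcases eq_or_ne j i with rfl | hj
      · simp [hy', Function.update_self]; omega
      · simp [hy', Function.update_of_ne hj]; exact hxy j
    · have hgoal : ∑ j, (y' j - x j) + 1 = ∑ j, (y j - x j) := by
        rw [Finset.sum_eq_sum_sdiff_singleton_add (Finset.mem_univ i),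
          Finset.sum_eq_sum_sdiff_singleton_add (Finset.mem_univ i)
            (fun j => y j - x j)]
        have : ∀ j ∈ Finset.univ \ {i}, y' j - x j = y j - x j := by
          intro j hj
          simp only [Finset.mem_sdiff, Finset.mem_singleton] at hj
          rw [hy', Function.update_of_ne hj.2]
        rw [Finset.sum_congr rfl this]
        have h2 : y' i = y i - 1 := by rw [hy', Function.update_self]
        have := hxy i
        omega
      omega

theorem DPartition.val_antitone {d : ℕ} (π : DPartition d) {x y : Fin d → ℕ}
    (h : ∀ i, x i ≤ y i) : π.val y ≤ π.val x :=
  π.val_antitone_aux _ x y h rfl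
theorem DPartition.size_eq_finsum {d : ℕ} (π : DPartition d) :
    π.size = ∑ᶠ x, π.val x := by
  rw [DPartition.size, finsum_eq_finset_sum_of_support_subset]
  simp

theorem DPartition.val_le_size {d : ℕ} (π : DPartition d) (x : Fin d → ℕ) :
    π.val x ≤ π.size := by
  rcases eq_or_ne (π.val x) 0 with h | h
  · omega
  · exact Finset.single_le_sum (fun _ _ => Nat.zero_le _)
      (π.finite.mem_toFinset.mpr h)

theorem DPartition.lt_size_of_val_ne_zero {d : ℕ} (π : DPartition d)
    {x : Fin d → ℕ} (h : π.val x ≠ 0) (i : Fin d) : x i < π.size := by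
  classical
  have hinj : Function.Injective (fun k : ℕ => Function.update (fun _ : Fin d => 0) i k) := by
    intro k l hkl
    have := congrFun hkl i
    simpa using this
  have hsub : (Finset.range (x i + 1)).image
      (fun k => Function.update (fun _ : Fin d => 0) i k) ⊆ π.finite.toFinset := by
    intro y hy
    simp only [Finset.mem_image, Finset.mem_range] at hy
    obtain ⟨k, hk, rfl⟩ := hy
    rw [Set.Finite.mem_toFinset, Function.mem_support]
    intro h0
    apply h
    have := π.val_antitone (x := Function.update (fun _ : Fin d => 0) i k) (y := x) ?_
    · omega
    · intro j
      rcases eq_or_ne j i with rfl | hj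
      · simp; omega
      · simp [Function.update_of_ne hj]
  have hcard : x i + 1 ≤ π.finite.toFinset.card := by
    calc x i + 1 = ((Finset.range (x i + 1)).image
        (fun k => Function.update (fun _ : Fin d => 0) i k)).card := by
          rw [Finset.card_image_of_injective _ hinj, Finset.card_range]
      _ ≤ _ := Finset.card_le_card hsub
  have : π.finite.toFinset.card ≤ π.size := by
    rw [DPartition.size]
    have := Finset.card_nsmul_le_sum π.finite.toFinset π.val 1
      (fun y hy => by
        rw [Set.Finite.mem_toFinset, Function.mem_support] at hy; omega)
    simpa using this
  omega

theorem DPartition.size_eq_zero_iff {d : ℕ} (π : DPartition d) :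
    π.size = 0 ↔ π.val (fun _ => 0) = 0 := by
  constructor
  · intro h
    have := π.val_le_size (fun _ => 0)
    omega
  · intro h
    rw [DPartition.size]
    apply Finset.sum_eq_zero
    intro x hx
    by_contra hne
    have := π.val_antitone (x := fun _ : Fin d => 0) (y := x) (fun i => Nat.zero_le _)
    omega

theorem DPartition.finite_size_le (d n : ℕ) :
    {ξ : DPartition d | ξ.size ≤ n}.Finite := by
  classical
  have : Set.InjOn (fun ξ : DPartition d => fun x : Fin d → Fin (n + 1) =>
      (⟨min (ξ.val (fun i => (x i : ℕ))) n, by omega⟩ : Fin (n + 1)))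
      {ξ : DPartition d | ξ.size ≤ n} := by
    intro ξ hξ ρ hρ h
    apply DPartition.ext'
    funext x
    by_cases hx : ∀ i, x i ≤ n
    · have hc := congrFun h (fun i => (⟨x i, by have := hx i; omega⟩ : Fin (n + 1)))
      simp only [Fin.mk.injEq] at hc
      have e1 : min (ξ.val x) n = ξ.val x :=
        min_eq_left ((ξ.val_le_size x).trans hξ)
      have e2 : min (ρ.val x) n = ρ.val x :=
        min_eq_left ((ρ.val_le_size x).trans hρ)
      simpa [e1, e2] using hc
    · push_neg at hx
      obtain ⟨i, hi⟩ := hx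
      have h1 : ξ.val x = 0 := by
        by_contra hne
        have := ξ.lt_size_of_val_ne_zero hne i
        simp only [Set.mem_setOf_eq] at hξ
        omega
      have h2 : ρ.val x = 0 := by
        by_contra hne
        have := ρ.lt_size_of_val_ne_zero hne i
        simp only [Set.mem_setOf_eq] at hρ
        omega
      rw [h1, h2]
  exact Set.Finite.of_finite_image (Set.toFinite _) this
theorem DPartition.bin_dec {d : ℕ} (ξ : DPartition d) (x : Fin (d + 1) → ℕ)
    (i : Fin (d + 1)) : ξ.bin (Function.update x i (x i + 1)) ≤ ξ.bin x := by
  induction i using Fin.lastCases with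
  | last =>
    unfold DPartition.bin
    have h1 : (fun j : Fin d => Function.update x (Fin.last d) (x (Fin.last d) + 1) j.castSucc)
        = fun j : Fin d => x j.castSucc := by
      funext j
      rw [Function.update_of_ne (Fin.castSucc_lt_last j).ne]
    rw [h1, Function.update_self]
    split_ifs with h2 h3 <;> omega
  | cast j =>
    unfold DPartition.bin
    have h1 : Function.update x j.castSucc (x j.castSucc + 1) (Fin.last d) = x (Fin.last d) := by
      rw [Function.update_of_ne (Fin.castSucc_lt_last j).ne']
    have h2 : (fun k : Fin d => Function.update x j.castSucc (x j.castSucc + 1) k.castSucc)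
        = Function.update (fun k : Fin d => x k.castSucc) j (x j.castSucc + 1) := by
      funext k
      rcases eq_or_ne k j with rfl | hk
      · simp
      · rw [Function.update_of_ne (fun h => hk (Fin.castSucc_injective _ h)),
          Function.update_of_ne hk]
    rw [h1, h2]
    have h3 : ξ.val (Function.update (fun k : Fin d => x k.castSucc) j (x j.castSucc + 1))
        ≤ ξ.val (fun k : Fin d => x k.castSucc) := ξ.dec _ j
    split_ifs with h4 h5 <;> omega

theorem DPartition.bin_snoc {d : ℕ} (ξ : DPartition d) (y : Fin d → ℕ) (k : ℕ) :
    ξ.bin (Fin.snoc y k) = if k < ξ.val y then 1 else 0 := by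
  simp [DPartition.bin, Fin.snoc_last, Fin.snoc_castSucc]

theorem DPartition.bin_support_subset {d : ℕ} (ξ : DPartition d) :
    Function.support ξ.bin ⊆
      ↑((ξ.finite.toFinset ×ˢ Finset.range ξ.size).image
        (fun p : (Fin d → ℕ) × ℕ => (Fin.snoc p.1 p.2 : Fin (d + 1) → ℕ))) := by
  classical
  intro x hx
  rw [Function.mem_support, DPartition.bin] at hx
  split_ifs at hx with h
  · rw [Finset.coe_image]
    refine ⟨(fun i => x i.castSucc, x (Fin.last d)), ?_, Fin.snoc_init_self x⟩
    rw [Finset.mem_coe, Finset.mem_product]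
    constructor
    · rw [Set.Finite.mem_toFinset, Function.mem_support]
      intro h0
      rw [h0] at h
      omega
    · exact Finset.mem_range.mpr (lt_of_lt_of_le h (ξ.val_le_size _))
  · exact absurd rfl hx

theorem DPartition.bin_support_finite {d : ℕ} (ξ : DPartition d) :
    (Function.support ξ.bin).Finite := by
  classical
  exact Set.Finite.subset (Finset.finite_toSet _) ξ.bin_support_subset

theorem DPartition.finsum_bin {d : ℕ} (ξ : DPartition d) :
    ∑ᶠ x, ξ.bin x = ξ.size := by
  classical
  rw [finsum_eq_finset_sum_of_support_subset _ ξ.bin_support_subset]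
  have hinj : ∀ p ∈ ξ.finite.toFinset ×ˢ Finset.range ξ.size,
      ∀ q ∈ ξ.finite.toFinset ×ˢ Finset.range ξ.size,
      (fun p : (Fin d → ℕ) × ℕ => (Fin.snoc p.1 p.2 : Fin (d + 1) → ℕ)) p
        = (fun p : (Fin d → ℕ) × ℕ => (Fin.snoc p.1 p.2 : Fin (d + 1) → ℕ)) q → p = q := by
    intro p _ q _ hpq
    simp only at hpq
    have h1 : p.1 = q.1 := by
      funext i
      have := congrFun hpq i.castSucc
      simpa [Fin.snoc_castSucc] using this
    have h2 : p.2 = q.2 := by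
      have := congrFun hpq (Fin.last d)
      simpa [Fin.snoc_last] using this
    exact Prod.ext h1 h2
  rw [Finset.sum_image hinj, Finset.sum_product]
  have key : ∀ y ∈ ξ.finite.toFinset, ∑ k ∈ Finset.range ξ.size, ξ.bin (Fin.snoc y k)
      = ξ.val y := by
    intro y _
    have hle : ξ.val y ≤ ξ.size := ξ.val_le_size y
    calc ∑ k ∈ Finset.range ξ.size, ξ.bin (Fin.snoc y k)
        = ∑ k ∈ Finset.range ξ.size, (if k < ξ.val y then 1 else 0) :=
          Finset.sum_congr rfl fun k _ => ξ.bin_snoc y k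
      _ = ((Finset.range ξ.size).filter (fun k => k < ξ.val y)).card :=
          (Finset.card_filter _ _).symm
      _ = ξ.val y := by
          have : (Finset.range ξ.size).filter (fun k => k < ξ.val y)
              = Finset.range (ξ.val y) := by
            ext k
            simp only [Finset.mem_filter, Finset.mem_range]
            omega
          rw [this, Finset.card_range]
  rw [Finset.sum_congr rfl key, DPartition.size]
noncomputable def DPartition.build {d : ℕ} (m : DPartition d → ℕ)
    (hfin : (Function.support m).Finite) : DPartition (d + 1) where
  val x := ∑ ξ ∈ hfin.toFinset, m ξ * ξ.bin x
  dec x i := Finset.sum_le_sum fun ξ _ => Nat.mul_le_mul_left _ (ξ.bin_dec x i)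
  finite := by
    apply Set.Finite.subset (Set.Finite.biUnion hfin
      (fun ξ _ => ξ.bin_support_finite))
    intro x hx
    rw [Function.mem_support] at hx
    obtain ⟨ξ, hξ, hne⟩ := Finset.exists_ne_zero_of_sum_ne_zero hx
    rw [Set.Finite.mem_toFinset] at hξ
    exact Set.mem_biUnion hξ (by
      rw [Function.mem_support]
      intro h0
      rw [h0, Nat.mul_zero] at hne
      exact hne rfl)

theorem DPartition.build_val {d : ℕ} (m : DPartition d → ℕ)
    (hfin : (Function.support m).Finite) (x : Fin (d + 1) → ℕ) :
    (DPartition.build m hfin).val x = ∑ᶠ ξ, m ξ * ξ.bin x := by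
  rw [DPartition.build]
  exact (finsum_eq_finset_sum_of_support_subset _ (by
    intro ξ hξ
    rw [Function.mem_support] at hξ
    rw [Set.Finite.coe_toFinset, Function.mem_support]
    intro h0
    rw [h0, Nat.zero_mul] at hξ
    exact hξ rfl)).symm

theorem DPartition.isMultSeq_build {d : ℕ} (m : DPartition d → ℕ)
    (hfin : (Function.support m).Finite) (hempty : ∀ ξ, ξ.size = 0 → m ξ = 0) :
    DIsMultSeq (DPartition.build m hfin) m :=
  ⟨hfin, hempty, fun x => DPartition.build_val m hfin x⟩

theorem DPartition.eq_build_of_isMultSeq {d : ℕ} {π : DPartition (d + 1)}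
    {m : DPartition d → ℕ} (h : DIsMultSeq π m) : π = DPartition.build m h.1 := by
  apply DPartition.ext'
  funext x
  rw [h.2.2 x, DPartition.build_val]

theorem DPartition.val_zero_pos_of_size_ne_zero {d : ℕ} (ξ : DPartition d)
    (h : ξ.size ≠ 0) : 0 < ξ.val (fun _ => 0) := by
  have := ξ.size_eq_zero_iff
  omega

theorem DPartition.bin_zero {d : ℕ} (ξ : DPartition d) (h : ξ.size ≠ 0) :
    ξ.bin (fun _ => 0) = 1 := by
  rw [DPartition.bin, if_pos]
  exact ξ.val_zero_pos_of_size_ne_zero h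

theorem DPartition.build_corner {d : ℕ} (m : DPartition d → ℕ)
    (hfin : (Function.support m).Finite) (hempty : ∀ ξ, ξ.size = 0 → m ξ = 0) :
    (DPartition.build m hfin).val (fun _ => 0) = ∑ᶠ ξ, m ξ := by
  rw [finsum_eq_sum _ hfin, DPartition.build]
  apply Finset.sum_congr rfl
  intro ξ hξ
  rw [Set.Finite.mem_toFinset, Function.mem_support] at hξ
  have hsz : ξ.size ≠ 0 := fun h0 => hξ (hempty ξ h0)
  rw [ξ.bin_zero hsz, Nat.mul_one]

theorem DPartition.build_size {d : ℕ} (m : DPartition d → ℕ)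
    (hfin : (Function.support m).Finite) :
    (DPartition.build m hfin).size = ∑ᶠ ξ, m ξ * ξ.size := by
  rw [DPartition.size_eq_finsum]
  have h1 : ∀ x, (DPartition.build m hfin).val x = ∑ ξ ∈ hfin.toFinset, m ξ * ξ.bin x :=
    fun x => rfl
  calc ∑ᶠ x, (DPartition.build m hfin).val x
      = ∑ᶠ x, ∑ ξ ∈ hfin.toFinset, m ξ * ξ.bin x := by
        exact finsum_congr h1
    _ = ∑ ξ ∈ hfin.toFinset, ∑ᶠ x, m ξ * ξ.bin x := by
        apply finsum_sum_comm
        intro ξ _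
        apply Set.Finite.subset ξ.bin_support_finite
        intro x hx
        rw [Function.mem_support] at hx ⊢
        intro h0
        rw [h0, Nat.mul_zero] at hx
        exact hx rfl
    _ = ∑ ξ ∈ hfin.toFinset, m ξ * ξ.size := by
        apply Finset.sum_congr rfl
        intro ξ _
        rw [← ξ.finsum_bin, mul_finsum _ _]
    _ = ∑ᶠ ξ, m ξ * ξ.size := by
        symm
        apply finsum_eq_finset_sum_of_support_subset
        intro ξ hξ
        rw [Function.mem_support] at hξ
        rw [Set.Finite.coe_toFinset]
        rw [Function.mem_support]
        intro h0
        rw [h0, Nat.zero_mul] at hξ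
        exact hξ rfl
/-- The set of admissible multiplicity functions with total multiplicity `a`
and total weighted size `b`. -/
def MSet (d a b : ℕ) : Set (DPartition d → ℕ) :=
  {m | (Function.support m).Finite ∧ (∀ ξ, ξ.size = 0 → m ξ = 0) ∧
    (∑ᶠ ξ, m ξ) = a ∧ (∑ᶠ ξ, m ξ * ξ.size) = b}

theorem finite_bounded_support {X : Type*} {s : Set X} (hs : s.Finite) (a : ℕ) :
    {m : X → ℕ | Function.support m ⊆ s ∧ ∀ x, m x ≤ a}.Finite := by
  classical
  haveI := hs.fintype
  apply Set.Finite.of_finite_image (f := fun (m : X → ℕ) (x : s) =>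
    (⟨min (m x) a, by omega⟩ : Fin (a + 1)))
  · exact Set.toFinite _
  · intro m hm m' hm' h
    funext x
    by_cases hx : x ∈ s
    · have hc := congrFun h ⟨x, hx⟩
      simp only [Fin.mk.injEq] at hc
      rwa [min_eq_left (hm.2 x), min_eq_left (hm'.2 x)] at hc
    · have h1 : m x = 0 := by
        by_contra hne
        exact hx (hm.1 hne)
      have h2 : m' x = 0 := by
        by_contra hne
        exact hx (hm'.1 hne)
      rw [h1, h2]

theorem MSet.support_subset {d a b : ℕ} {m : DPartition d → ℕ} (hm : m ∈ MSet d a b) :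
    Function.support m ⊆ {ξ : DPartition d | 1 ≤ ξ.size ∧ ξ.size ≤ b} := by
  obtain ⟨hfin, hempty, hsum, hwsum⟩ := hm
  intro ξ hξ
  rw [Function.mem_support] at hξ
  have h1 : 1 ≤ ξ.size := by
    rcases Nat.eq_zero_or_pos ξ.size with h | h
    · exact absurd (hempty ξ h) hξ
    · exact h
  refine ⟨h1, ?_⟩
  have hsup : Function.support (fun ξ : DPartition d => m ξ * ξ.size) ⊆ hfin.toFinset := by
    intro η hη
    rw [Function.mem_support] at hη
    rw [Set.Finite.coe_toFinset, Function.mem_support]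
    intro h0
    rw [h0, Nat.zero_mul] at hη
    exact hη rfl
  have : m ξ * ξ.size ≤ b := by
    rw [← hwsum, finsum_eq_finset_sum_of_support_subset _ hsup]
    exact Finset.single_le_sum (f := fun ξ : DPartition d => m ξ * ξ.size)
      (fun _ _ => Nat.zero_le _)
      (by rw [Set.Finite.mem_toFinset, Function.mem_support]; exact hξ)
  have hm1 : 1 ≤ m ξ := Nat.one_le_iff_ne_zero.mpr hξ
  calc ξ.size = 1 * ξ.size := (Nat.one_mul _).symm
    _ ≤ m ξ * ξ.size := Nat.mul_le_mul_right _ hm1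
    _ ≤ b := this

theorem MSet.le {d a b : ℕ} {m : DPartition d → ℕ} (hm : m ∈ MSet d a b)
    (ξ : DPartition d) : m ξ ≤ a := by
  obtain ⟨hfin, hempty, hsum, hwsum⟩ := hm
  rcases Nat.eq_zero_or_pos (m ξ) with h | h
  · omega
  · rw [← hsum, finsum_eq_sum _ hfin]
    exact Finset.single_le_sum (fun _ _ => Nat.zero_le _)
      (by rw [Set.Finite.mem_toFinset, Function.mem_support]; omega)

theorem MSet.finite (d a b : ℕ) : (MSet d a b).Finite := by
  apply Set.Finite.subset (finite_bounded_support
    (Set.Finite.subset (DPartition.finite_size_le d b)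
      (fun ξ (hξ : 1 ≤ ξ.size ∧ ξ.size ≤ b) => hξ.2)) a)
  intro m hm
  exact ⟨MSet.support_subset hm, MSet.le hm⟩
theorem MSet.corner_size {d a b : ℕ} {π : DPartition (d + 1)} {m : DPartition d → ℕ}
    (hπ : π.val (fun _ => 0) = a ∧ π.size = b) (h : DIsMultSeq π m) : m ∈ MSet d a b := by
  obtain ⟨hfin, hempty, hval⟩ := h
  have hbuild : π = DPartition.build m hfin := DPartition.eq_build_of_isMultSeq ⟨hfin, hempty, hval⟩
  refine ⟨hfin, hempty, ?_, ?_⟩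
  · rw [← DPartition.build_corner m hfin hempty, ← hbuild]
    exact hπ.1
  · rw [← DPartition.build_size m hfin, ← hbuild]
    exact hπ.2

theorem lhs_eq (d a b : ℕ) :
    (∑ᶠ π ∈ {π : DPartition (d + 1) | π.val (fun _ => 0) = a ∧ π.size = b}, π.omegaC)
      = ∑ᶠ m ∈ MSet d a b, ∏ᶠ ξ : DPartition d, (1 : ℚ) / ((m ξ).factorial : ℚ) := by
  classical
  set A : Set (DPartition (d + 1)) := {π | π.val (fun _ => 0) = a ∧ π.size = b} with hA
  set t : DPartition (d + 1) → Set (DPartition d → ℕ) :=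
    fun π => {m | DIsMultSeq π m} with ht
  have hAfin : A.Finite := by
    apply Set.Finite.subset (DPartition.finite_size_le (d + 1) b)
    intro π hπ
    exact le_of_eq hπ.2
  have htsub : ∀ π ∈ A, t π ⊆ MSet d a b := fun π hπ m hm => MSet.corner_size hπ hm
  have htfin : ∀ π ∈ A, (t π).Finite :=
    fun π hπ => Set.Finite.subset (MSet.finite d a b) (htsub π hπ)
  have hdisj : A.PairwiseDisjoint t := by
    intro π hπ π' hπ' hne
    simp only [Function.onFun, Set.disjoint_left]
    intro m hm hm'
    apply hne
    rw [DPartition.eq_build_of_isMultSeq hm, DPartition.eq_build_of_isMultSeq hm']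
  have hunion : (⋃ π ∈ A, t π) = MSet d a b := by
    apply Set.Subset.antisymm
    · intro m hm
      rw [Set.mem_iUnion₂] at hm
      obtain ⟨π, hπ, hm⟩ := hm
      exact htsub π hπ hm
    · intro m hm
      obtain ⟨hfin, hempty, hsum, hwsum⟩ := hm
      rw [Set.mem_iUnion₂]
      refine ⟨DPartition.build m hfin, ⟨?_, ?_⟩, DPartition.isMultSeq_build m hfin hempty⟩
      · rw [DPartition.build_corner m hfin hempty]; exact hsum
      · rw [DPartition.build_size m hfin]; exact hwsum
  have := finsum_mem_biUnion (f := fun m : DPartition d → ℕ =>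
    ∏ᶠ ξ : DPartition d, (1 : ℚ) / ((m ξ).factorial : ℚ)) hdisj hAfin htfin
  rw [hunion] at this
  exact this.symm
/-- abbreviation for the weight -/
noncomputable def gw {d : ℕ} (m : DPartition d → ℕ) : ℚ :=
  ∏ᶠ ξ : DPartition d, (1 : ℚ) / ((m ξ).factorial : ℚ)

theorem gw_eq_prod {d : ℕ} {m : DPartition d → ℕ} {s : Finset (DPartition d)}
    (h : Function.support m ⊆ ↑s) :
    gw m = ∏ ξ ∈ s, (1 : ℚ) / ((m ξ).factorial : ℚ) := by
  apply finprod_eq_prod_of_mulSupport_subset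
  intro ξ hξ
  apply h
  rw [Function.mem_mulSupport] at hξ
  rw [Function.mem_support]
  intro h0
  rw [h0] at hξ
  simp at hξ

theorem mset_zero (d b : ℕ) : MSet d 0 b = if b = 0 then {fun _ => 0} else ∅ := by
  have hzero : ∀ m ∈ MSet d 0 b, m = fun _ => 0 := by
    intro m hm
    obtain ⟨hfin, _, hsum, _⟩ := hm
    funext ξ
    rcases Nat.eq_zero_or_pos (m ξ) with h | h
    · exact h
    · exfalso
      have : m ξ ≤ 0 := hsum ▸ (by
        rw [finsum_eq_sum _ hfin]
        exact Finset.single_le_sum (fun _ _ => Nat.zero_le _)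
          (by rw [Set.Finite.mem_toFinset, Function.mem_support]; omega))
      omega
  have hz : (fun _ : DPartition d => 0) ∈ MSet d 0 0 := by
    refine ⟨by simp, fun _ _ => rfl, by simp, by simp⟩
  split_ifs with hb
  · subst hb
    apply Set.Subset.antisymm
    · intro m hm
      rw [Set.mem_singleton_iff]
      exact hzero m hm
    · intro m hm
      rw [Set.mem_singleton_iff] at hm
      rw [hm]; exact hz
  · apply Set.eq_empty_of_forall_notMem
    intro m hm
    have h1 := hzero m hm
    obtain ⟨hfin, _, _, hwsum⟩ := hm
    apply hb
    rw [← hwsum, h1]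
    simp

theorem F_zero (d b : ℕ) :
    (∑ᶠ m ∈ MSet d 0 b, gw m) = if b = 0 then 1 else 0 := by
  rw [mset_zero]
  split_ifs with hb
  · rw [finsum_mem_singleton]
    rw [gw_eq_prod (s := ∅) (by simp)]
    simp
  · rw [finsum_mem_empty]
theorem support_update_subset' {X : Type*} [DecidableEq X] (m : X → ℕ) (ξ : X) (v : ℕ) :
    Function.support (Function.update m ξ v) ⊆ Function.support m ∪ {ξ} := by
  intro η hη
  rcases eq_or_ne η ξ with rfl | hne
  · exact Set.mem_union_right _ rfl
  · rw [Function.mem_support, Function.update_of_ne hne] at hη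
    exact Set.mem_union_left _ hη

theorem sum_update_mul {X : Type*} [DecidableEq X] {s : Finset X} {ξ : X} (hξ : ξ ∈ s)
    (m : X → ℕ) (v : ℕ) (w : X → ℕ) :
    ∑ η ∈ s, (Function.update m ξ v η) * w η = v * w ξ + ∑ η ∈ s.erase ξ, m η * w η := by
  have h : (fun η => Function.update m ξ v η * w η)
      = Function.update (fun η => m η * w η) ξ (v * w ξ) := by
    funext η
    rcases eq_or_ne η ξ with rfl | hne
    · simp
    · rw [Function.update_of_ne hne, Function.update_of_ne hne]
  rw [h, Finset.sum_update_of_mem hξ, Finset.sdiff_singleton_eq_erase]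

theorem sum_eq_add_erase {X : Type*} [DecidableEq X] {s : Finset X} {ξ : X} (hξ : ξ ∈ s)
    (f : X → ℕ) : ∑ η ∈ s, f η = f ξ + ∑ η ∈ s.erase ξ, f η :=
  (Finset.add_sum_erase s f hξ).symm

theorem F_succ (d a b : ℕ) :
    ((a : ℚ) + 1) * ∑ᶠ m ∈ MSet d (a + 1) b, gw m
      = ∑ n ∈ Finset.range (b + 1),
          (if n = 0 then 0 else (Nat.card {ξ : DPartition d // ξ.size = n} : ℚ)) *
            ∑ᶠ m ∈ MSet d a (b - n), gw m := by
  classical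
  set P : Set (DPartition d) := {ξ : DPartition d | 1 ≤ ξ.size ∧ ξ.size ≤ b} with hPdef
  have hP : P.Finite := (DPartition.finite_size_le d b).subset
    (fun ξ (hξ : 1 ≤ ξ.size ∧ ξ.size ≤ b) => hξ.2)
  set Pf : Finset (DPartition d) := hP.toFinset with hPf
  have hPfmem : ∀ ξ : DPartition d, ξ ∈ Pf ↔ (1 ≤ ξ.size ∧ ξ.size ≤ b) := by
    intro ξ
    rw [hPf, Set.Finite.mem_toFinset]
    exact Iff.rfl
  have hsubP : ∀ {a' b' : ℕ} {m : DPartition d → ℕ}, b' ≤ b → m ∈ MSet d a' b' →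
      Function.support m ⊆ ↑Pf := by
    intro a' b' m hb' hm
    refine (MSet.support_subset hm).trans ?_
    intro ξ hξ
    rw [Finset.mem_coe, hPfmem]
    exact ⟨hξ.1, hξ.2.trans hb'⟩
  set T : Finset (DPartition d → ℕ) := (MSet.finite d (a + 1) b).toFinset with hT
  have hTmem : ∀ m, m ∈ T ↔ m ∈ MSet d (a + 1) b := by
    intro m; rw [hT, Set.Finite.mem_toFinset]
  -- Step A
  have stepA : ((a : ℚ) + 1) * ∑ᶠ m ∈ MSet d (a + 1) b, gw m
      = ∑ ξ ∈ Pf, ∑ m ∈ T, (m ξ : ℚ) * gw m := by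
    rw [finsum_mem_eq_finite_toFinset_sum _ (MSet.finite d (a + 1) b), ← hT,
      Finset.mul_sum, ← Finset.sum_comm]
    apply Finset.sum_congr rfl
    intro m hm
    rw [hTmem] at hm
    have hms : Function.support m ⊆ ↑Pf := hsubP le_rfl hm
    have h1 : ∑ ξ ∈ Pf, m ξ = a + 1 := by
      rw [← finsum_eq_finset_sum_of_support_subset m hms]
      exact hm.2.2.1
    have h2 : ((a : ℚ) + 1) = ∑ ξ ∈ Pf, (m ξ : ℚ) := by
      rw [← Nat.cast_sum, h1]
      push_cast
      ring
    rw [h2, Finset.sum_mul]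
  rw [stepA]
  -- Step B
  have stepB : ∀ ξ ∈ Pf, ∑ m ∈ T, (m ξ : ℚ) * gw m
      = ∑ᶠ m ∈ MSet d a (b - ξ.size), gw m := by
    intro ξ hξ
    rw [hPfmem] at hξ
    obtain ⟨hξ1, hξb⟩ := hξ
    have hξPf : ξ ∈ Pf := by rw [hPfmem]; exact ⟨hξ1, hξb⟩
    rw [finsum_mem_eq_finite_toFinset_sum _ (MSet.finite d a (b - ξ.size))]
    rw [← Finset.sum_filter_of_ne (p := fun m => m ξ ≠ 0)
      (fun m _ hne h0 => hne (by rw [h0]; simp))]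
    apply Finset.sum_nbij' (i := fun m => Function.update m ξ (m ξ - 1))
      (j := fun m' => Function.update m' ξ (m' ξ + 1))
    -- hi : maps into T'
    · intro m hm
      rw [Finset.mem_filter, hTmem] at hm
      obtain ⟨⟨hfin, hempty, hsum, hwsum⟩, hne⟩ := hm
      rw [Set.Finite.mem_toFinset]
      have hms : Function.support m ⊆ ↑Pf := hsubP le_rfl ⟨hfin, hempty, hsum, hwsum⟩
      have hus : Function.support (Function.update m ξ (m ξ - 1)) ⊆ ↑Pf := by
        refine (support_update_subset' m ξ _).trans ?_
        intro η hη
        rcases hη with hη | hη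
        · exact hms hη
        · rw [Set.mem_singleton_iff] at hη; rw [hη, Finset.mem_coe]; exact hξPf
      refine ⟨Set.Finite.subset (hfin.union (Set.finite_singleton ξ))
        (support_update_subset' m ξ _), ?_, ?_, ?_⟩
      · intro η hη
        have hηξ : η ≠ ξ := fun h => by rw [h] at hη; omega
        rw [Function.update_of_ne hηξ]
        exact hempty η hη
      · rw [finsum_eq_finset_sum_of_support_subset _ hus]
        have e1 : ∑ η ∈ Pf, Function.update m ξ (m ξ - 1) η
            = (m ξ - 1) + ∑ η ∈ Pf.erase ξ, m η := by
          rw [Finset.sum_update_of_mem hξPf, Finset.sdiff_singleton_eq_erase]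
        have e2 : ∑ η ∈ Pf, m η = m ξ + ∑ η ∈ Pf.erase ξ, m η := sum_eq_add_erase hξPf m
        have e3 : ∑ η ∈ Pf, m η = a + 1 := by
          rw [← finsum_eq_finset_sum_of_support_subset m hms]; exact hsum
        omega
      · rw [finsum_eq_finset_sum_of_support_subset _ (by
          intro η hη
          rw [Function.mem_support] at hη
          apply hus
          rw [Function.mem_support]
          intro h0; rw [h0, Nat.zero_mul] at hη; exact hη rfl)]
        rw [sum_update_mul hξPf m (m ξ - 1) (fun η => η.size)]
        have e2 : ∑ η ∈ Pf, m η * η.size = m ξ * ξ.size + ∑ η ∈ Pf.erase ξ, m η * η.size :=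
          sum_eq_add_erase hξPf _
        have e3 : ∑ η ∈ Pf, m η * η.size = b := by
          rw [← finsum_eq_finset_sum_of_support_subset _ (by
            intro η hη
            rw [Function.mem_support] at hη
            apply hms
            rw [Function.mem_support]
            intro h0; rw [h0, Nat.zero_mul] at hη; exact hη rfl)]
          exact hwsum
        have e4 : m ξ * ξ.size = (m ξ - 1) * ξ.size + ξ.size := by
          obtain ⟨k, hk⟩ := Nat.exists_eq_succ_of_ne_zero hne
          rw [hk]
          simp [Nat.succ_mul]
        omega
    -- hj
    · intro m' hm'
      rw [Set.Finite.mem_toFinset] at hm'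
      obtain ⟨hfin, hempty, hsum, hwsum⟩ := hm'
      have hm'M : m' ∈ MSet d a (b - ξ.size) := ⟨hfin, hempty, hsum, hwsum⟩
      have hms : Function.support m' ⊆ ↑Pf := hsubP (Nat.sub_le b ξ.size) hm'M
      have hus : Function.support (Function.update m' ξ (m' ξ + 1)) ⊆ ↑Pf := by
        refine (support_update_subset' m' ξ _).trans ?_
        intro η hη
        rcases hη with hη | hη
        · exact hms hη
        · rw [Set.mem_singleton_iff] at hη; rw [hη, Finset.mem_coe]; exact hξPf
      rw [Finset.mem_filter, hTmem]
      refine ⟨⟨Set.Finite.subset (hfin.union (Set.finite_singleton ξ))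
        (support_update_subset' m' ξ _), ?_, ?_, ?_⟩, by simp⟩
      · intro η hη
        have hηξ : η ≠ ξ := fun h => by rw [h] at hη; omega
        rw [Function.update_of_ne hηξ]
        exact hempty η hη
      · rw [finsum_eq_finset_sum_of_support_subset _ hus]
        have e1 : ∑ η ∈ Pf, Function.update m' ξ (m' ξ + 1) η
            = (m' ξ + 1) + ∑ η ∈ Pf.erase ξ, m' η := by
          rw [Finset.sum_update_of_mem hξPf, Finset.sdiff_singleton_eq_erase]
        have e2 : ∑ η ∈ Pf, m' η = m' ξ + ∑ η ∈ Pf.erase ξ, m' η := sum_eq_add_erase hξPf m'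
        have e3 : ∑ η ∈ Pf, m' η = a := by
          rw [← finsum_eq_finset_sum_of_support_subset m' hms]; exact hsum
        omega
      · rw [finsum_eq_finset_sum_of_support_subset _ (by
          intro η hη
          rw [Function.mem_support] at hη
          apply hus
          rw [Function.mem_support]
          intro h0; rw [h0, Nat.zero_mul] at hη; exact hη rfl)]
        rw [sum_update_mul hξPf m' (m' ξ + 1) (fun η => η.size)]
        have e2 : ∑ η ∈ Pf, m' η * η.size = m' ξ * ξ.size + ∑ η ∈ Pf.erase ξ, m' η * η.size :=
          sum_eq_add_erase hξPf _
        have e3 : ∑ η ∈ Pf, m' η * η.size = b - ξ.size := by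
          rw [← finsum_eq_finset_sum_of_support_subset _ (by
            intro η hη
            rw [Function.mem_support] at hη
            apply hms
            rw [Function.mem_support]
            intro h0; rw [h0, Nat.zero_mul] at hη; exact hη rfl)]
          exact hwsum
        have e4 : (m' ξ + 1) * ξ.size = m' ξ * ξ.size + ξ.size := by
          simp [Nat.succ_mul]
        omega
    -- left_inv
    · intro m hm
      rw [Finset.mem_filter] at hm
      funext η
      rcases eq_or_ne η ξ with rfl | hne
      · simp only [Function.update_self]
        have := hm.2
        omega
      · rw [Function.update_of_ne hne, Function.update_of_ne hne]
    -- right_inv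
    · intro m' hm'
      funext η
      rcases eq_or_ne η ξ with rfl | hne
      · simp only [Function.update_self]; omega
      · rw [Function.update_of_ne hne, Function.update_of_ne hne]
    -- values2
    · intro m hm
      rw [Finset.mem_filter, hTmem] at hm
      obtain ⟨hmM, hne⟩ := hm
      have hms : Function.support m ⊆ ↑Pf := hsubP le_rfl hmM
      have hus : Function.support (Function.update m ξ (m ξ - 1)) ⊆ ↑Pf := by
        refine (support_update_subset' m ξ _).trans ?_
        intro η hη
        rcases hη with hη | hη
        · exact hms hη
        · rw [Set.mem_singleton_iff] at hη; rw [hη, Finset.mem_coe]; exact hξPf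
      rw [gw_eq_prod hms, gw_eq_prod hus]
      have hupd : (fun η => (1 : ℚ) / ((Function.update m ξ (m ξ - 1) η).factorial : ℚ))
          = Function.update (fun η => (1 : ℚ) / ((m η).factorial : ℚ)) ξ
              ((1 : ℚ) / (((m ξ - 1).factorial : ℚ))) := by
        funext η
        rcases eq_or_ne η ξ with rfl | hne'
        · simp
        · rw [Function.update_of_ne hne', Function.update_of_ne hne']
      calc (m ξ : ℚ) * ∏ η ∈ Pf, (1 : ℚ) / ((m η).factorial : ℚ)
          = (m ξ : ℚ) * ((1 : ℚ) / ((m ξ).factorial : ℚ)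
              * ∏ η ∈ Pf.erase ξ, (1 : ℚ) / ((m η).factorial : ℚ)) := by
            rw [← Finset.mul_prod_erase Pf (fun η => (1 : ℚ) / ((m η).factorial : ℚ)) hξPf]
        _ = (1 : ℚ) / (((m ξ - 1).factorial : ℚ))
              * ∏ η ∈ Pf.erase ξ, (1 : ℚ) / ((m η).factorial : ℚ) := by
            obtain ⟨k, hk⟩ := Nat.exists_eq_succ_of_ne_zero hne
            rw [hk]
            have hfac : (((k + 1).factorial : ℚ)) = ((k : ℚ) + 1) * (k.factorial : ℚ) := by
              rw [Nat.factorial_succ]; push_cast; ring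
            have hk0 : ((k.factorial : ℚ)) ≠ 0 := Nat.cast_ne_zero.mpr (Nat.factorial_ne_zero k)
            simp only [Nat.succ_sub_one, hfac]
            push_cast
            rw [← mul_assoc]
            congr 1
            field_simp
        _ = ∏ η ∈ Pf, (1 : ℚ) / ((Function.update m ξ (m ξ - 1) η).factorial : ℚ) := by
            rw [hupd, Finset.prod_update_of_mem hξPf, Finset.sdiff_singleton_eq_erase]
  -- Step C
  rw [Finset.sum_congr rfl stepB]
  have hmaps : ∀ ξ ∈ Pf, ξ.size ∈ Finset.range (b + 1) := by
    intro ξ hξ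
    rw [hPfmem] at hξ
    rw [Finset.mem_range]
    omega
  rw [← Finset.sum_fiberwise_of_maps_to hmaps
    (fun ξ => ∑ᶠ m ∈ MSet d a (b - ξ.size), gw m)]
  apply Finset.sum_congr rfl
  intro n hn
  rw [Finset.mem_range] at hn
  have hcongr : ∀ ξ ∈ Pf.filter (fun ξ => ξ.size = n),
      (∑ᶠ m ∈ MSet d a (b - ξ.size), gw m) = ∑ᶠ m ∈ MSet d a (b - n), gw m := by
    intro ξ hξ
    rw [(Finset.mem_filter.mp hξ).2]
  rw [Finset.sum_congr rfl hcongr, Finset.sum_const, nsmul_eq_mul]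
  congr 1
  rcases eq_or_ne n 0 with rfl | hn0
  · rw [if_pos rfl]
    have : Pf.filter (fun ξ => ξ.size = 0) = ∅ := by
      rw [Finset.filter_eq_empty_iff]
      intro ξ hξ
      rw [hPfmem] at hξ
      omega
    rw [this, Finset.card_empty, Nat.cast_zero]
  · rw [if_neg hn0]
    have hSn : {ξ : DPartition d | ξ.size = n}.Finite :=
      (DPartition.finite_size_le d n).subset (fun ξ hξ => le_of_eq hξ)
    have h1 : Nat.card {ξ : DPartition d // ξ.size = n} = hSn.toFinset.card := by
      have h0 := Nat.card_coe_set_eq {ξ : DPartition d | ξ.size = n}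
      rw [Set.ncard_eq_toFinset_card _ hSn] at h0
      exact h0
    have h2 : hSn.toFinset = Pf.filter (fun ξ => ξ.size = n) := by
      ext ξ
      rw [Set.Finite.mem_toFinset, Finset.mem_filter, hPfmem, Set.mem_setOf_eq]
      constructor
      · intro h
        exact ⟨⟨by omega, by omega⟩, h⟩
      · intro h
        exact h.2
    rw [h1, h2]
theorem main_key (d : ℕ) (S : PowerSeries ℚ)
    (hS : ∀ n : ℕ, PowerSeries.coeff n S =
      if n = 0 then 0 else (Nat.card {ξ : DPartition d // ξ.size = n} : ℚ)) :
    ∀ (a b : ℕ), (a.factorial : ℚ) * ∑ᶠ m ∈ MSet d a b, gw m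
      = PowerSeries.coeff b (S ^ a) := by
  intro a
  induction a with
  | zero =>
    intro b
    simp only [Nat.factorial_zero, Nat.cast_one, one_mul, pow_zero]
    rw [F_zero, PowerSeries.coeff_one]
  | succ a ih =>
    intro b
    have h1 : (((a + 1).factorial : ℕ) : ℚ) = ((a : ℚ) + 1) * (a.factorial : ℚ) := by
      rw [Nat.factorial_succ]; push_cast; ring
    calc (((a + 1).factorial : ℕ) : ℚ) * ∑ᶠ m ∈ MSet d (a + 1) b, gw m
        = (a.factorial : ℚ) * (((a : ℚ) + 1) * ∑ᶠ m ∈ MSet d (a + 1) b, gw m) := by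
          rw [h1]; ring
      _ = (a.factorial : ℚ) * ∑ n ∈ Finset.range (b + 1),
            (if n = 0 then 0 else (Nat.card {ξ : DPartition d // ξ.size = n} : ℚ)) *
              ∑ᶠ m ∈ MSet d a (b - n), gw m := by rw [F_succ]
      _ = ∑ n ∈ Finset.range (b + 1),
            (if n = 0 then 0 else (Nat.card {ξ : DPartition d // ξ.size = n} : ℚ)) *
              ((a.factorial : ℚ) * ∑ᶠ m ∈ MSet d a (b - n), gw m) := by
          rw [Finset.mul_sum]
          apply Finset.sum_congr rfl
          intro n _
          ring
      _ = ∑ n ∈ Finset.range (b + 1),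
            PowerSeries.coeff n S * PowerSeries.coeff (b - n) (S ^ a) := by
          apply Finset.sum_congr rfl
          intro n _
          rw [ih, hS]
      _ = ∑ p ∈ Finset.HasAntidiagonal.antidiagonal b,
            PowerSeries.coeff p.1 S * PowerSeries.coeff p.2 (S ^ a) :=
          (Finset.Nat.sum_antidiagonal_eq_sum_range_succ_mk
            (fun p => PowerSeries.coeff p.1 S * PowerSeries.coeff p.2 (S ^ a)) b).symm
      _ = PowerSeries.coeff b (S ^ (a + 1)) := by
          rw [pow_succ, mul_comm (S ^ a) S, PowerSeries.coeff_mul]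

/-- for every `d ≥ 1` (here `d+1` with `d : ℕ`), the identity
`log(Σ_{(d+1)-partitions π} ω^c_π t^{π₁…₁} q^{|π|}) = t · Σ_{d-partitions ξ, |ξ|≥1} q^{|ξ|}`
in `ℚ[[t,q]]`, stated coefficientwise in exponential form: for all `a, b`, the sum of
`ω^c_π` over `(d+1)`-partitions with `π₁…₁ = a` and `|π| = b` equals the
`q^b`-coefficient of `S^a/a!`, where `S = Σ_{n≥1} #{d-partitions of size n}·q^n`. -/
theorem stmt_14 (d : ℕ) (S : PowerSeries ℚ)
    (hS : ∀ n : ℕ, PowerSeries.coeff n S =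
      if n = 0 then 0 else (Nat.card {ξ : DPartition d // ξ.size = n} : ℚ))
    (a b : ℕ) :
    ∑ᶠ π ∈ {π : DPartition (d + 1) | π.val (fun _ => 0) = a ∧ π.size = b}, π.omegaC =
      PowerSeries.coeff b (((a.factorial : ℚ)⁻¹) • S ^ a) := by
  rw [lhs_eq]
  have hgw : (∑ᶠ m ∈ MSet d a b, ∏ᶠ ξ : DPartition d, (1 : ℚ) / ((m ξ).factorial : ℚ))
      = ∑ᶠ m ∈ MSet d a b, gw m := rfl
  rw [hgw]
  have hfac : ((a.factorial : ℕ) : ℚ) ≠ 0 := Nat.cast_ne_zero.mpr (Nat.factorial_ne_zero a)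
  have hkey := main_key d S hS a b
  rw [map_smul, smul_eq_mul, ← hkey, ← mul_assoc, inv_mul_cancel₀ hfac, one_mul]
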